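/- Let b = (b₁,…,b_K) be a finite mixed radix basis (each b_i ≥ 2) and let 1 ≤ k < K. Let b' be the basis obtained by swapping b_k and b_{k+1}. If (a_i)_{0≤i<K} are the digits of n (0 ≤ n < b₁⋯b_K) in basis b, then the digits (a'_i) of n in basis b' satisfy a'_i = a_i for i ∉ {k−1,k}, a'_{k−1} = (a_{k−1} + b_k·a_k) mod b_{k+1}, and a'_k = (a_{k−1} + b_k·a_k) / b_{k+1} (integer division). -/

import Mathlib

/-- Change of digits of `n` under the transposition of two consecutive entries `b_k, b_{k+1}`
of a finite mixed radix basis `(b_1,…,b_K)`: only the digits at positions `k−1` and `k`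
change, via `a'_{k−1} = (a_{k−1} + b_k·a_k) % b_{k+1}` and
`a'_k = (a_{k−1} + b_k·a_k) / b_{k+1}`. -/
theorem stmt5 (K k : ℕ) (hk1 : 1 ≤ k) (hk2 : k < K) (b : ℕ → ℕ)
    (hb : ∀ i, 1 ≤ i → i ≤ K → 2 ≤ b i) (n : ℕ)
    (hn : n < ∏ j ∈ Finset.range K, b (j + 1))
    (a : ℕ → ℕ) (ha : ∀ i < K, a i < b (i + 1))
    (hsum : n = ∑ i ∈ Finset.range K, a i * ∏ j ∈ Finset.range i, b (j + 1))
    (b' : ℕ → ℕ)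
    (hb'1 : b' k = b (k + 1)) (hb'2 : b' (k + 1) = b k)
    (hb'3 : ∀ i, i ≠ k → i ≠ k + 1 → b' i = b i)
    (a' : ℕ → ℕ)
    (ha'1 : a' (k - 1) = (a (k - 1) + b k * a k) % b (k + 1))
    (ha'2 : a' k = (a (k - 1) + b k * a k) / b (k + 1))
    (ha'3 : ∀ i, i ≠ k - 1 → i ≠ k → a' i = a i) :
    (∀ i < K, a' i < b' (i + 1)) ∧
      n = ∑ i ∈ Finset.range K, a' i * ∏ j ∈ Finset.range i, b' (j + 1) := by
  obtain ⟨l, rfl⟩ : ∃ l, k = l + 1 := ⟨k - 1, by omega⟩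
  simp only [Nat.add_sub_cancel] at ha'1 ha'2 ha'3
  have hBpos : 0 < b (l + 1 + 1) := by
    have := hb (l + 1 + 1) (by omega) (by omega); omega
  have hal : a l < b (l + 1) := ha l (by omega)
  have hal1 : a (l + 1) < b (l + 1 + 1) := ha (l + 1) hk2
  have hm : a l + b (l + 1) * a (l + 1) < b (l + 1) * b (l + 1 + 1) := by
    calc a l + b (l + 1) * a (l + 1) < b (l + 1) + b (l + 1) * a (l + 1) := by omega
      _ = b (l + 1) * (a (l + 1) + 1) := by ring
      _ ≤ b (l + 1) * b (l + 1 + 1) := Nat.mul_le_mul_left _ hal1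
  have hπ' : ∀ i, i ≤ l → ∏ j ∈ Finset.range i, b' (j + 1) = ∏ j ∈ Finset.range i, b (j + 1) := by
    intro i hi
    exact Finset.prod_congr rfl fun j hj => by
      rw [Finset.mem_range] at hj
      exact hb'3 (j + 1) (by omega) (by omega)
  have hprod : ∀ i, l + 2 ≤ i →
      ∏ j ∈ Finset.range i, b' (j + 1) = ∏ j ∈ Finset.range i, b (j + 1) := by
    intro i hi
    obtain ⟨d, rfl⟩ : ∃ d, i = (l + 2) + d := ⟨i - (l + 2), by omega⟩
    clear hi
    induction d with
    | zero =>
      simp only [Nat.add_zero]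
      rw [Finset.prod_range_succ, Finset.prod_range_succ, Finset.prod_range_succ,
        Finset.prod_range_succ, hb'1, hb'2, hπ' l le_rfl]
      ring
    | succ d ih =>
      rw [show l + 2 + (d + 1) = (l + 2 + d) + 1 by ring, Finset.prod_range_succ,
        Finset.prod_range_succ, ih, hb'3 _ (by omega) (by omega)]
  constructor
  · intro i hi
    rcases eq_or_ne i l with rfl | h1
    · rw [ha'1, show i + 1 = i + 1 from rfl]
      have : b' (i + 1) = b (i + 1 + 1) := hb'1
      rw [this]
      exact Nat.mod_lt _ hBpos
    rcases eq_or_ne i (l + 1) with rfl | h2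
    · rw [ha'2, hb'2, Nat.div_lt_iff_lt_mul hBpos]
      calc a l + b (l + 1) * a (l + 1) < b (l + 1) * b (l + 1 + 1) := hm
        _ = b (l + 1) * b (l + 1 + 1) := rfl
    · rw [ha'3 i h1 h2, hb'3 (i + 1) (by omega) (by omega)]
      exact ha i hi
  · rw [hsum]
    have hsplit : ∀ c : ℕ → ℕ, ∑ i ∈ Finset.range K, c i =
        ∑ i ∈ Finset.range (l + 2), c i + ∑ i ∈ Finset.Ico (l + 2) K, c i := by
      intro c
      rw [Finset.range_eq_Ico,
        ← Finset.sum_Ico_consecutive _ (by omega : 0 ≤ l + 2) (by omega : l + 2 ≤ K), Finset.range_eq_Ico]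
    rw [hsplit, hsplit]
    have hIco : ∑ i ∈ Finset.Ico (l + 2) K, a' i * ∏ j ∈ Finset.range i, b' (j + 1) =
        ∑ i ∈ Finset.Ico (l + 2) K, a i * ∏ j ∈ Finset.range i, b (j + 1) := by
      refine Finset.sum_congr rfl fun i hi => ?_
      rw [Finset.mem_Ico] at hi
      rw [ha'3 i (by omega) (by omega), hprod i hi.1]
    rw [hIco]
    congr 1
    rw [Finset.sum_range_succ, Finset.sum_range_succ, Finset.sum_range_succ,
      Finset.sum_range_succ]
    have hhead : ∑ i ∈ Finset.range l, a' i * ∏ j ∈ Finset.range i, b' (j + 1) =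
        ∑ i ∈ Finset.range l, a i * ∏ j ∈ Finset.range i, b (j + 1) := by
      refine Finset.sum_congr rfl fun i hi => ?_
      rw [Finset.mem_range] at hi
      rw [ha'3 i (by omega) (by omega), hπ' i (by omega)]
    rw [hhead, ha'1, ha'2, Finset.prod_range_succ, Finset.prod_range_succ, hπ' l le_rfl, hb'1]
    have key := Nat.mod_add_div (a l + b (l + 1) * a (l + 1)) (b (l + 1 + 1))
    set P := ∏ j ∈ Finset.range l, b (j + 1)
    set m := a l + b (l + 1) * a (l + 1) with hmdef
    set B := b (l + 1 + 1)
    have : a l * P + a (l + 1) * (P * b (l + 1)) = m * P := by rw [hmdef]; ring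
    rw [add_assoc, add_assoc, this]
    congr 1
    calc m * P = (m % B + B * (m / B)) * P := by rw [key]
      _ = m % B * P + m / B * (P * B) := by ring
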